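/- Let N ∈ ℕ with N ≥ 1, let p00, p10, p01, p11 > 0 with p00 + p10 + p01 + p11 = 1, set a1 = p10 + p11, a2 = p01 + p11, a = p11, and let (X1, X2) follow the bivariate binomial distribution BVB with these parameters. For integers r, s ≥ 0, let μ_(r,s) = E[(X1)_(r) · (X2)_(s)] denote the joint factorial moments, where x_(k) = x(x−1)⋯(x−k+1) is the falling factorial with x_(0) = 1. Then for all integers r ≥ 1 and s ≥ 1: μ_(r,s) = (N − r + 1)·a1·μ_(r−1,s) − s·a2·μ_(r,s−1) + (N − r + 1)·s·a·μ_(r−1,s−1). -/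
import Mathlib


open scoped NNReal ENNReal

/-- Expectation of a real-valued function under a distribution on `ℕ × ℕ`. -/
noncomputable def pExp (p : PMF (ℕ × ℕ)) (g : ℕ × ℕ → ℝ) : ℝ :=
  ∑' q : ℕ × ℕ, (p q).toReal * g q

/-- The distribution of the (componentwise) sum of `n` i.i.d. bivariate random
vectors, each with distribution `bern`.  For a bivariate Bernoulli `bern` with
probabilities `p00, p10, p01, p11`, `iidSum bern N` is the bivariate binomial
distribution `BVB(N; p00, p10, p01, p11)` of type I. -/
noncomputable def iidSum (bern : PMF (ℕ × ℕ)) : ℕ → PMF (ℕ × ℕ)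
  | 0 => PMF.pure (0, 0)
  | n + 1 => (iidSum bern n).bind fun a => bern.map fun b => (a.1 + b.1, a.2 + b.2)

/-- The joint factorial moment `μ_(r,s) = E[(X1)_(r) (X2)_(s)]` of a distribution
on `ℕ × ℕ`, where `x_(k) = x (x-1) ⋯ (x-k+1)` is the falling factorial. -/
noncomputable def factMoment (p : PMF (ℕ × ℕ)) (r s : ℕ) : ℝ :=
  ∑' q : ℕ × ℕ, (p q).toReal * (q.1.descFactorial r : ℝ) * (q.2.descFactorial s : ℝ)

namespace BVBAux

lemma desc_add_one (m k : ℕ) :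
    (m + 1).descFactorial k = m.descFactorial k + k * m.descFactorial (k - 1) := by
  cases k with
  | zero => simp
  | succ k =>
    rcases le_or_gt k m with h | h
    · rw [Nat.succ_descFactorial_succ, Nat.descFactorial_succ, Nat.succ_sub_one,
        ← Nat.add_mul]
      congr 1
      omega
    · have h0 : m.descFactorial k = 0 := Nat.descFactorial_eq_zero_iff_lt.mpr h
      have h1 : m.descFactorial (k + 1) = 0 :=
        Nat.descFactorial_eq_zero_iff_lt.mpr (by omega)
      rw [Nat.succ_descFactorial_succ, h0, h1, Nat.succ_sub_one, h0]
      simp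

/-- auxiliary expectation (in `ℝ≥0∞`) of a bind -/
lemma exp_bind (p : PMF (ℕ × ℕ)) (f : ℕ × ℕ → PMF (ℕ × ℕ)) (g : ℕ × ℕ → ℝ≥0∞) :
    ∑' q, (p.bind f) q * g q = ∑' a, p a * ∑' q, f a q * g q := by
  simp only [PMF.bind_apply]
  calc ∑' q, (∑' a, p a * f a q) * g q
      = ∑' q, ∑' a, p a * f a q * g q := tsum_congr fun q => ENNReal.tsum_mul_right.symm
    _ = ∑' a, ∑' q, p a * f a q * g q := ENNReal.tsum_comm
    _ = ∑' a, p a * ∑' q, f a q * g q := by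
        refine tsum_congr fun a => ?_
        rw [← ENNReal.tsum_mul_left]
        exact tsum_congr fun q => by ring

lemma exp_map (p : PMF (ℕ × ℕ)) (h : ℕ × ℕ → ℕ × ℕ) (g : ℕ × ℕ → ℝ≥0∞) :
    ∑' q, (p.map h) q * g q = ∑' a, p a * g (h a) := by
  rw [show p.map h = p.bind (PMF.pure ∘ h) from rfl, exp_bind]
  refine tsum_congr fun a => ?_
  congr 1
  rw [tsum_eq_single (h a) (fun q hq => by
    simp only [Function.comp_apply]
    rw [PMF.pure_apply_of_ne _ _ hq, zero_mul])]
  simp only [Function.comp_apply]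
  rw [PMF.pure_apply_self, one_mul]

section Main

variable (p00 p10 p01 p11 : ℝ≥0) (hsum : p00 + p10 + p01 + p11 = 1)
    (bern : PMF (ℕ × ℕ))
    (hb00 : bern (0, 0) = (p00 : ℝ≥0∞)) (hb10 : bern (1, 0) = (p10 : ℝ≥0∞))
    (hb01 : bern (0, 1) = (p01 : ℝ≥0∞)) (hb11 : bern (1, 1) = (p11 : ℝ≥0∞))

/-- The four-point support set. -/
def S4 : Finset (ℕ × ℕ) := {(0, 0), (1, 0), (0, 1), (1, 1)}

include hsum hb00 hb10 hb01 hb11 in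
lemma bern_eq_zero (q : ℕ × ℕ) (hq : q ∉ S4) : bern q = 0 := by
  have hS : ∑ x ∈ S4, bern x = 1 := by
    have : ((p00 + p10 + p01 + p11 : ℝ≥0) : ℝ≥0∞) = 1 := by rw [hsum]; simp
    rw [show (S4 : Finset (ℕ × ℕ)) = {(0,0),(1,0),(0,1),(1,1)} from rfl]
    rw [Finset.sum_insert (by decide), Finset.sum_insert (by decide),
      Finset.sum_insert (by decide), Finset.sum_singleton, hb00, hb10, hb01, hb11]
    push_cast at this
    rw [← this]
    ring
  have h2 : ∑ x ∈ insert q S4, bern x ≤ 1 := by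
    rw [← bern.tsum_coe]
    exact ENNReal.sum_le_tsum _
  rw [Finset.sum_insert hq, hS] at h2
  have h3 : bern q + 1 ≤ 0 + 1 := by simpa using h2
  simpa using (ENNReal.add_le_add_iff_right ENNReal.one_ne_top).mp h3

/-- descFactorial weight function -/
noncomputable def D (r s : ℕ) (q : ℕ × ℕ) : ℝ≥0∞ :=
  ((q.1.descFactorial r * q.2.descFactorial s : ℕ) : ℝ≥0∞)

/-- factorial moments in `ℝ≥0∞` -/
noncomputable def M (n r s : ℕ) : ℝ≥0∞ := ∑' q, iidSum bern n q * D r s q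

lemma M_zero (r s : ℕ) :
    M bern 0 r s = ((Nat.descFactorial 0 r * Nat.descFactorial 0 s : ℕ) : ℝ≥0∞) := by
  rw [M, show iidSum bern 0 = PMF.pure (0, 0) from rfl]
  rw [tsum_eq_single ((0, 0) : ℕ × ℕ) (fun q hq => by
    rw [PMF.pure_apply_of_ne _ _ hq, zero_mul])]
  rw [PMF.pure_apply_self, one_mul]
  rfl

include hsum hb00 hb10 hb01 hb11 in
lemma M_succ (n r s : ℕ) :
    M bern (n + 1) r s
      = M bern n r s + r * ((p10 : ℝ≥0∞) + p11) * M bern n (r - 1) s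
        + s * ((p01 : ℝ≥0∞) + p11) * M bern n r (s - 1)
        + r * s * (p11 : ℝ≥0∞) * M bern n (r - 1) (s - 1) := by
  have hsum1 : (p00 : ℝ≥0∞) + p10 + p01 + p11 = 1 := by
    have : ((p00 + p10 + p01 + p11 : ℝ≥0) : ℝ≥0∞) = 1 := by rw [hsum]; simp
    push_cast at this
    exact this
  have hbz := bern_eq_zero p00 p10 p01 p11 hsum bern hb00 hb10 hb01 hb11
  have exp_bern : ∀ φ : ℕ × ℕ → ℝ≥0∞,
      ∑' b, bern b * φ b
        = (p00 : ℝ≥0∞) * φ (0, 0) + p10 * φ (1, 0) + p01 * φ (0, 1) + p11 * φ (1, 1) := by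
    intro φ
    rw [tsum_eq_sum (s := S4) (fun b hb => by rw [hbz b hb, zero_mul])]
    rw [show (S4 : Finset (ℕ × ℕ)) = {(0,0),(1,0),(0,1),(1,1)} from rfl]
    rw [Finset.sum_insert (by decide), Finset.sum_insert (by decide),
      Finset.sum_insert (by decide), Finset.sum_singleton, hb00, hb10, hb01, hb11]
    ring
  calc M bern (n + 1) r s
      = ∑' a : ℕ × ℕ, iidSum bern n a *
          ((p00 : ℝ≥0∞) * D r s (a.1 + 0, a.2 + 0) + p10 * D r s (a.1 + 1, a.2 + 0)
            + p01 * D r s (a.1 + 0, a.2 + 1) + p11 * D r s (a.1 + 1, a.2 + 1)) := by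
        rw [M, show iidSum bern (n + 1)
          = (iidSum bern n).bind (fun a => bern.map fun b => (a.1 + b.1, a.2 + b.2)) from rfl,
          exp_bind]
        exact tsum_congr fun a => by rw [exp_map, exp_bern fun b => D r s (a.1 + b.1, a.2 + b.2)]
    _ = ∑' a : ℕ × ℕ, (iidSum bern n a * D r s a
          + (r : ℝ≥0∞) * ((p10 : ℝ≥0∞) + p11) * (iidSum bern n a * D (r - 1) s a)
          + (s : ℝ≥0∞) * ((p01 : ℝ≥0∞) + p11) * (iidSum bern n a * D r (s - 1) a)
          + (r : ℝ≥0∞) * s * (p11 : ℝ≥0∞) * (iidSum bern n a * D (r - 1) (s - 1) a)) := by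
        refine tsum_congr fun a => ?_
        have e1 : ((a.1 + 1).descFactorial r : ℝ≥0∞)
            = (a.1.descFactorial r : ℝ≥0∞) + r * (a.1.descFactorial (r - 1) : ℝ≥0∞) := by
          rw [desc_add_one]; push_cast; ring
        have e2 : ((a.2 + 1).descFactorial s : ℝ≥0∞)
            = (a.2.descFactorial s : ℝ≥0∞) + s * (a.2.descFactorial (s - 1) : ℝ≥0∞) := by
          rw [desc_add_one]; push_cast; ring
        simp only [D, add_zero]
        push_cast [e1, e2]
        have expand : ∀ P X X' Y Y' : ℝ≥0∞,
            P * ((p00 : ℝ≥0∞) * (X * Y) + p10 * ((X + r * X') * Y)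
              + p01 * (X * (Y + s * Y')) + p11 * ((X + r * X') * (Y + s * Y')))
            = P * (X * Y) * ((p00 : ℝ≥0∞) + p10 + p01 + p11)
              + (r : ℝ≥0∞) * ((p10 : ℝ≥0∞) + p11) * (P * (X' * Y))
              + (s : ℝ≥0∞) * ((p01 : ℝ≥0∞) + p11) * (P * (X * Y'))
              + (r : ℝ≥0∞) * s * (p11 : ℝ≥0∞) * (P * (X' * Y')) := by
          intro P X X' Y Y'; ring
        rw [show (((a.1).descFactorial r : ℝ≥0∞) + r * ((a.1).descFactorial (r-1) : ℝ≥0∞))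
          = _ from rfl]
        calc iidSum bern n a *
              ((p00 : ℝ≥0∞) * (((a.1).descFactorial r : ℝ≥0∞) * ((a.2).descFactorial s : ℝ≥0∞))
                + p10 * ((((a.1).descFactorial r : ℝ≥0∞) + r * ((a.1).descFactorial (r-1) : ℝ≥0∞)) * ((a.2).descFactorial s : ℝ≥0∞))
                + p01 * (((a.1).descFactorial r : ℝ≥0∞) * (((a.2).descFactorial s : ℝ≥0∞) + s * ((a.2).descFactorial (s-1) : ℝ≥0∞)))
                + p11 * ((((a.1).descFactorial r : ℝ≥0∞) + r * ((a.1).descFactorial (r-1) : ℝ≥0∞)) * (((a.2).descFactorial s : ℝ≥0∞) + s * ((a.2).descFactorial (s-1) : ℝ≥0∞))))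
            = iidSum bern n a * (((a.1).descFactorial r : ℝ≥0∞) * ((a.2).descFactorial s : ℝ≥0∞)) * ((p00 : ℝ≥0∞) + p10 + p01 + p11)
              + (r : ℝ≥0∞) * ((p10 : ℝ≥0∞) + p11) * (iidSum bern n a * (((a.1).descFactorial (r-1) : ℝ≥0∞) * ((a.2).descFactorial s : ℝ≥0∞)))
              + (s : ℝ≥0∞) * ((p01 : ℝ≥0∞) + p11) * (iidSum bern n a * (((a.1).descFactorial r : ℝ≥0∞) * ((a.2).descFactorial (s-1) : ℝ≥0∞)))
              + (r : ℝ≥0∞) * s * (p11 : ℝ≥0∞) * (iidSum bern n a * (((a.1).descFactorial (r-1) : ℝ≥0∞) * ((a.2).descFactorial (s-1) : ℝ≥0∞))) :=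
            expand _ _ _ _ _
          _ = _ := by rw [hsum1, mul_one]
    _ = _ := by
        rw [ENNReal.tsum_add, ENNReal.tsum_add, ENNReal.tsum_add,
          ENNReal.tsum_mul_left, ENNReal.tsum_mul_left, ENNReal.tsum_mul_left]
        simp only [M, D]

include hsum hb00 hb10 hb01 hb11 in
lemma M_ne_top (n : ℕ) : ∀ r s : ℕ, M bern n r s ≠ ⊤ := by
  induction n with
  | zero => intro r s; rw [M_zero]; exact ENNReal.natCast_ne_top _
  | succ n ih =>
    intro r s
    rw [M_succ p00 p10 p01 p11 hsum bern hb00 hb10 hb01 hb11]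
    have hc : ∀ x y : ℝ≥0, ((x : ℝ≥0∞) + (y : ℝ≥0∞)) ≠ ⊤ :=
      fun x y => ENNReal.add_ne_top.mpr ⟨ENNReal.coe_ne_top, ENNReal.coe_ne_top⟩
    refine ENNReal.add_ne_top.mpr ⟨ENNReal.add_ne_top.mpr ⟨ENNReal.add_ne_top.mpr
      ⟨ih r s, ?_⟩, ?_⟩, ?_⟩
    · exact ENNReal.mul_ne_top (ENNReal.mul_ne_top (ENNReal.natCast_ne_top _) (hc _ _)) (ih _ _)
    · exact ENNReal.mul_ne_top (ENNReal.mul_ne_top (ENNReal.natCast_ne_top _) (hc _ _)) (ih _ _)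
    · exact ENNReal.mul_ne_top (ENNReal.mul_ne_top
        (ENNReal.mul_ne_top (ENNReal.natCast_ne_top _) (ENNReal.natCast_ne_top _))
        ENNReal.coe_ne_top) (ih _ _)

lemma factMoment_eq (n r s : ℕ) :
    factMoment (iidSum bern n) r s = (M bern n r s).toReal := by
  rw [factMoment, M,
    ENNReal.tsum_toReal_eq (f := fun q : ℕ × ℕ => iidSum bern n q * D r s q)
      (fun q => ENNReal.mul_ne_top (PMF.apply_ne_top _ _) (ENNReal.natCast_ne_top _))]
  refine tsum_congr fun q => ?_
  rw [ENNReal.toReal_mul, D]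
  push_cast
  rw [ENNReal.toReal_mul, ENNReal.toReal_natCast, ENNReal.toReal_natCast]
  ring

/-- The factorial-moment recursion in `n`, as a pure real recursion. -/
noncomputable def G (a1 a2 a : ℝ) : ℕ → ℕ → ℕ → ℝ
  | 0, r, s => if r = 0 ∧ s = 0 then 1 else 0
  | n + 1, r, s =>
      G a1 a2 a n r s + r * a1 * G a1 a2 a n (r - 1) s
        + s * a2 * G a1 a2 a n r (s - 1) + r * s * a * G a1 a2 a n (r - 1) (s - 1)

include hsum hb00 hb10 hb01 hb11 in
lemma M_toReal_eq_G (n : ℕ) : ∀ r s : ℕ,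
    (M bern n r s).toReal
      = G ((p10 : ℝ) + p11) ((p01 : ℝ) + p11) (p11 : ℝ) n r s := by
  induction n with
  | zero =>
    intro r s
    rw [M_zero]
    rcases r with _ | r <;> rcases s with _ | s <;> simp [G]
  | succ n ih =>
    intro r s
    have hM := fun r s => M_ne_top p00 p10 p01 p11 hsum bern hb00 hb10 hb01 hb11 n r s
    have hc : ∀ x y : ℝ≥0, ((x : ℝ≥0∞) + (y : ℝ≥0∞)) ≠ ⊤ :=
      fun x y => ENNReal.add_ne_top.mpr ⟨ENNReal.coe_ne_top, ENNReal.coe_ne_top⟩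
    have h1 : (↑r * ((p10 : ℝ≥0∞) + ↑p11) * M bern n (r - 1) s) ≠ ⊤ :=
      ENNReal.mul_ne_top (ENNReal.mul_ne_top (ENNReal.natCast_ne_top _) (hc _ _)) (hM _ _)
    have h2 : (↑s * ((p01 : ℝ≥0∞) + ↑p11) * M bern n r (s - 1)) ≠ ⊤ :=
      ENNReal.mul_ne_top (ENNReal.mul_ne_top (ENNReal.natCast_ne_top _) (hc _ _)) (hM _ _)
    have h3 : (↑r * ↑s * (p11 : ℝ≥0∞) * M bern n (r - 1) (s - 1)) ≠ ⊤ :=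
      ENNReal.mul_ne_top (ENNReal.mul_ne_top
        (ENNReal.mul_ne_top (ENNReal.natCast_ne_top _) (ENNReal.natCast_ne_top _))
        ENNReal.coe_ne_top) (hM _ _)
    rw [M_succ p00 p10 p01 p11 hsum bern hb00 hb10 hb01 hb11,
      ENNReal.toReal_add (ENNReal.add_ne_top.mpr ⟨ENNReal.add_ne_top.mpr
        ⟨hM _ _, h1⟩, h2⟩) h3,
      ENNReal.toReal_add (ENNReal.add_ne_top.mpr ⟨hM _ _, h1⟩) h2,
      ENNReal.toReal_add (hM _ _) h1,
      ENNReal.toReal_mul, ENNReal.toReal_mul, ENNReal.toReal_mul, ENNReal.toReal_mul,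
      ENNReal.toReal_mul, ENNReal.toReal_mul, ENNReal.toReal_mul]
    simp only [ENNReal.toReal_natCast, ENNReal.toReal_add ENNReal.coe_ne_top
      ENNReal.coe_ne_top, ENNReal.coe_toReal]
    rw [ih, ih, ih, ih]
    simp [G]

lemma G_rec (a1 a2 a : ℝ) (n : ℕ) : ∀ r s : ℕ, 1 ≤ r →
    G a1 a2 a n r s
      = ((n : ℝ) - (r : ℝ) + 1) * a1 * G a1 a2 a n (r - 1) s
        - (s : ℝ) * a2 * G a1 a2 a n r (s - 1)
        + ((n : ℝ) - (r : ℝ) + 1) * (s : ℝ) * a * G a1 a2 a n (r - 1) (s - 1) := by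
  induction n with
  | zero =>
    rintro (_ | r) s hr
    · omega
    · rcases r with _ | r <;> rcases s with _ | _ | s <;> simp [G] <;> push_cast <;> ring
  | succ n ih =>
    rintro (_ | (_ | r)) (_ | (_ | s)) hr
    · omega
    · omega
    · omega
    · -- r = 1, s = 0
      have H1 := ih 1 0 le_rfl
      simp only [G, Nat.add_sub_cancel, Nat.zero_sub] at H1 ⊢
      push_cast at H1 ⊢
      linear_combination H1
    · -- r = 1, s = 1
      have H1 := ih 1 1 le_rfl
      have H3 := ih 1 0 le_rfl
      simp only [G, Nat.add_sub_cancel, Nat.zero_sub] at H1 H3 ⊢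
      push_cast at H1 H3 ⊢
      linear_combination H1 + a2 * H3
    · -- r = 1, s = s + 2
      have H1 := ih 1 (s + 2) le_rfl
      have H3 := ih 1 (s + 1) le_rfl
      simp only [G, Nat.add_sub_cancel, Nat.zero_sub] at H1 H3 ⊢
      push_cast at H1 H3 ⊢
      linear_combination H1 + ((s : ℝ) + 2) * a2 * H3
    · -- r = r + 2, s = 0
      have H1 := ih (r + 2) 0 (by omega)
      have H2 := ih (r + 1) 0 (by omega)
      simp only [G, Nat.add_sub_cancel, Nat.zero_sub] at H1 H2 ⊢
      push_cast at H1 H2 ⊢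
      linear_combination H1 + ((r : ℝ) + 1) * a1 * H2
    · -- r = r + 2, s = 1
      have H1 := ih (r + 2) 1 (by omega)
      have H2 := ih (r + 1) 1 (by omega)
      have H3 := ih (r + 2) 0 (by omega)
      have H4 := ih (r + 1) 0 (by omega)
      simp only [G, Nat.add_sub_cancel, Nat.zero_sub] at H1 H2 H3 H4 ⊢
      push_cast at H1 H2 H3 H4 ⊢
      linear_combination H1 + ((r : ℝ) + 1) * a1 * H2 + a2 * H3 + ((r : ℝ) + 1) * a * H4
    · -- r = r + 2, s = s + 2
      have H1 := ih (r + 2) (s + 2) (by omega)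
      have H2 := ih (r + 1) (s + 2) (by omega)
      have H3 := ih (r + 2) (s + 1) (by omega)
      have H4 := ih (r + 1) (s + 1) (by omega)
      simp only [G, Nat.add_sub_cancel, Nat.zero_sub] at H1 H2 H3 H4 ⊢
      push_cast at H1 H2 H3 H4 ⊢
      linear_combination H1 + ((r : ℝ) + 1) * a1 * H2 + ((s : ℝ) + 2) * a2 * H3
        + ((r : ℝ) + 1) * ((s : ℝ) + 2) * a * H4

end Main

end BVBAux

theorem bvb_factorial_moment_recursion (N : ℕ) (hN : 1 ≤ N) (p00 p10 p01 p11 : ℝ≥0)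
    (h00 : 0 < p00) (h10 : 0 < p10) (h01 : 0 < p01) (h11 : 0 < p11)
    (hsum : p00 + p10 + p01 + p11 = 1)
    (bern : PMF (ℕ × ℕ))
    (hb00 : bern (0, 0) = (p00 : ℝ≥0∞)) (hb10 : bern (1, 0) = (p10 : ℝ≥0∞))
    (hb01 : bern (0, 1) = (p01 : ℝ≥0∞)) (hb11 : bern (1, 1) = (p11 : ℝ≥0∞))
    (a1 a2 a : ℝ) (ha1 : a1 = (p10 : ℝ) + (p11 : ℝ)) (ha2 : a2 = (p01 : ℝ) + (p11 : ℝ))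
    (ha : a = (p11 : ℝ)) :
    ∀ r s : ℕ, 1 ≤ r → 1 ≤ s →
      factMoment (iidSum bern N) r s
        = ((N : ℝ) - (r : ℝ) + 1) * a1 * factMoment (iidSum bern N) (r - 1) s
          - (s : ℝ) * a2 * factMoment (iidSum bern N) r (s - 1)
          + ((N : ℝ) - (r : ℝ) + 1) * (s : ℝ) * a
              * factMoment (iidSum bern N) (r - 1) (s - 1) := by
  intro r s hr hs
  have key : ∀ r' s' : ℕ, factMoment (iidSum bern N) r' s'
      = BVBAux.G a1 a2 a N r' s' := by
    intro r' s'
    rw [BVBAux.factMoment_eq, BVBAux.M_toReal_eq_G p00 p10 p01 p11 hsum bern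
      hb00 hb10 hb01 hb11, ha1, ha2, ha]
  rw [key, key, key, key]
  exact BVBAux.G_rec a1 a2 a N r s hr
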